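/- Let A be an associative algebra over a field with series h(u) ∈ 1 + u^{-1}A[[u^{-1}]] and e(v) ∈ v^{-1}A[[v^{-1}]] satisfying (u-v)[h(u), e(v)] = h(u)(e(u) - e(v)), together with the exchange relation e(u+1)h(u) = h(u)e(u). Define h_{↑ℓ}(u) := h(u)h(u+1)⋯h(u+ℓ-1). Then for all ℓ ≥ 1: (u-v)[h_{↑ℓ}(u), e(v)] = ℓ · h_{↑ℓ}(u)(e(u) - e(v)). -/

import Mathlib

/-!
STATEMENT 14: Let `A` be an associative algebra over a field with series
`h(u) ∈ 1 + u⁻¹A[[u⁻¹]]` and `e(v) ∈ v⁻¹A[[v⁻¹]]` satisfying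
`(u - v)[h(u), e(v)] = h(u)(e(u) - e(v))` and the exchange relation
`e(u+1) h(u) = h(u) e(u)`.  Define `h_{↑ℓ}(u) := h(u) h(u+1) ⋯ h(u+ℓ-1)`.
Then for all `ℓ ≥ 1`:
`(u - v)[h_{↑ℓ}(u), e(v)] = ℓ · h_{↑ℓ}(u)(e(u) - e(v))`.

Laurent convention: `(u - v) * S = T` is encoded as
`(v⁻¹ - u⁻¹) * S = u⁻¹ * v⁻¹ * T` in `MvPowerSeries (Fin 2) A`
(variable `0` is `u⁻¹`, variable `1` is `v⁻¹`); a shift `h(u+j)` is defined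
via its coefficients `shiftCoeff j h`.
-/

noncomputable section

/-- The series `Σ_{r} f^{(r)} u^{-r}` viewed in `A[[u⁻¹, v⁻¹]]`, where the first
power-series variable (index `0`) plays the role of `u⁻¹` and the second
(index `1`) the role of `v⁻¹`. -/
def Useries {A : Type*} [Ring A] (f : ℕ → A) : MvPowerSeries (Fin 2) A :=
  fun d => if d 1 = 0 then f (d 0) else 0

/-- The series `Σ_{r} f^{(r)} v^{-r}` viewed in `A[[u⁻¹, v⁻¹]]`. -/
def Vseries {A : Type*} [Ring A] (f : ℕ → A) : MvPowerSeries (Fin 2) A :=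
  fun d => if d 0 = 0 then f (d 1) else 0

/-- `u⁻¹` as an element of `A[[u⁻¹, v⁻¹]]`. -/
def Xu {A : Type*} [Ring A] : MvPowerSeries (Fin 2) A := MvPowerSeries.X 0

/-- `v⁻¹` as an element of `A[[u⁻¹, v⁻¹]]`. -/
def Xv {A : Type*} [Ring A] : MvPowerSeries (Fin 2) A := MvPowerSeries.X 1

/-- Coefficients of the shifted series `f(u + c) = Σ_r f^{(r)} (u + c)^{-r}`,
via the expansion `(u+c)^{-r} = Σ_{s ≥ 0} (-c)^s * choose (r+s-1) s * u^{-r-s}`: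
the coefficient of `u^{-m}` is `Σ_{r ≤ m} (-c)^{m-r} * choose (m-1) (m-r) * f r`. -/
def shiftCoeff {A : Type*} [Ring A] (c : ℤ) (f : ℕ → A) (m : ℕ) : A :=
  ∑ r ∈ Finset.range (m + 1), ((-c) ^ (m - r) * (Nat.choose (m - 1) (m - r) : ℤ)) • f r

/-- `h_{↑ℓ}(u) = h(u) h(u+1) ⋯ h(u+ℓ-1)` in `A[[u⁻¹, v⁻¹]]`. -/
def hUp {A : Type*} [Ring A] (h : ℕ → A) (ℓ : ℕ) : MvPowerSeries (Fin 2) A :=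
  ((List.range ℓ).map (fun j => Useries (shiftCoeff (j : ℤ) h))).prod

/-! ### Auxiliary machinery -/

section Aux

open Finset

variable {A : Type*} [Ring A]

/-- The exponent pair `(a, b)` as an element of `Fin 2 →₀ ℕ`. -/
def d2 (a b : ℕ) : Fin 2 →₀ ℕ := Finsupp.single 0 a + Finsupp.single 1 b

@[simp] lemma d2_apply0 (a b : ℕ) : d2 a b 0 = a := by simp [d2]
@[simp] lemma d2_apply1 (a b : ℕ) : d2 a b 1 = b := by simp [d2, Finsupp.single_apply]

lemma eq_d2 (d : Fin 2 →₀ ℕ) : d = d2 (d 0) (d 1) := by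
  ext i
  fin_cases i <;> simp

omit [Ring A] in
lemma ext2 {F G : MvPowerSeries (Fin 2) A}
    (h : ∀ a b, F (d2 a b) = G (d2 a b)) : F = G := by
  funext d
  rw [eq_d2 d]
  exact h _ _

lemma coeff_apply (F : MvPowerSeries (Fin 2) A) (d : Fin 2 →₀ ℕ) :
    MvPowerSeries.coeff d F = F d := rfl

lemma coeff_mul2 (F G : MvPowerSeries (Fin 2) A) (a b : ℕ) :
    (F * G) (d2 a b) =
      ∑ x ∈ Finset.range (a + 1), ∑ z ∈ Finset.range (b + 1),
        F (d2 x z) * G (d2 (a - x) (b - z)) := by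
  have hc := MvPowerSeries.coeff_mul (R := A) (d2 a b) F G
  rw [coeff_apply] at hc
  rw [hc, ← Finset.sum_product']
  refine Finset.sum_bij' (fun p _ => ((p.1 0 : ℕ), (p.1 1 : ℕ)))
    (fun q _ => (d2 q.1 q.2, d2 (a - q.1) (b - q.2))) ?_ ?_ ?_ ?_ ?_
  · intro p hp
    rw [Finset.HasAntidiagonal.mem_antidiagonal] at hp
    have h0 : p.1 0 + p.2 0 = a := by
      have := congrArg (fun f => f 0) hp; simpa using this
    have h1 : p.1 1 + p.2 1 = b := by
      have := congrArg (fun f => f 1) hp; simpa using this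
    simp only [Finset.mem_product, Finset.mem_range]
    omega
  · intro q hq
    simp only [Finset.mem_product, Finset.mem_range] at hq
    rw [Finset.HasAntidiagonal.mem_antidiagonal]
    ext i
    fin_cases i <;> simp <;> omega
  · intro p hp
    beta_reduce
    rw [Finset.HasAntidiagonal.mem_antidiagonal] at hp
    have h0 : p.1 0 + p.2 0 = a := by
      have := congrArg (fun f => f 0) hp; simpa using this
    have h1 : p.1 1 + p.2 1 = b := by
      have := congrArg (fun f => f 1) hp; simpa using this
    have e1 : d2 (p.1 0) (p.1 1) = p.1 := (eq_d2 p.1).symm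
    have e2 : d2 (a - p.1 0) (b - p.1 1) = p.2 := by
      rw [eq_d2 p.2]
      congr 1 <;> omega
    simp [e1, e2]
  · intro q hq; simp
  · intro p hp
    beta_reduce
    rw [coeff_apply, coeff_apply]
    congr 1
    · exact congrArg F (eq_d2 p.1)
    · rw [Finset.HasAntidiagonal.mem_antidiagonal] at hp
      have h0 : p.1 0 + p.2 0 = a := by
        have := congrArg (fun f => f 0) hp; simpa using this
      have h1 : p.1 1 + p.2 1 = b := by
        have := congrArg (fun f => f 1) hp; simpa using this
      refine congrArg G ?_
      rw [eq_d2 p.2]; congr 1 <;> omega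

lemma sub_coeff (F G : MvPowerSeries (Fin 2) A) (d : Fin 2 →₀ ℕ) :
    (F - G) d = F d - G d := rfl

lemma nsmul_coeff (n : ℕ) (F : MvPowerSeries (Fin 2) A) (d : Fin 2 →₀ ℕ) :
    (n • F) d = n • F d := rfl

lemma Useries_coeff (f : ℕ → A) (a b : ℕ) :
    Useries f (d2 a b) = if b = 0 then f a else 0 := by
  simp [Useries]

lemma Vseries_coeff (f : ℕ → A) (a b : ℕ) :
    Vseries f (d2 a b) = if a = 0 then f b else 0 := by
  simp [Vseries]

lemma one_coeff2 (a b : ℕ) :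
    (1 : MvPowerSeries (Fin 2) A) (d2 a b) = if a = 0 ∧ b = 0 then 1 else 0 := by
  have hc := MvPowerSeries.coeff_one (σ := Fin 2) (R := A) (n := d2 a b)
  rw [coeff_apply] at hc
  rw [hc]
  by_cases hab : a = 0 ∧ b = 0
  · rw [if_pos hab, if_pos]
    obtain ⟨rfl, rfl⟩ := hab
    ext i; fin_cases i <;> simp
  · rw [if_neg hab, if_neg]
    intro hcon
    exact hab ⟨by simpa using congrArg (fun f => f 0) hcon,
      by simpa using congrArg (fun f => f 1) hcon⟩

lemma Xu_coeff (a b : ℕ) :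
    (Xu : MvPowerSeries (Fin 2) A) (d2 a b) = if a = 1 ∧ b = 0 then 1 else 0 := by
  have hc := MvPowerSeries.coeff_X (R := A) (d2 a b) 0
  rw [coeff_apply] at hc
  rw [Xu, hc]
  by_cases hab : a = 1 ∧ b = 0
  · rw [if_pos hab, if_pos]
    obtain ⟨rfl, rfl⟩ := hab
    ext i; fin_cases i <;> simp [Finsupp.single_apply]
  · rw [if_neg hab, if_neg]
    intro hcon
    refine hab ⟨?_, ?_⟩
    · have := congrArg (fun f => f 0) hcon; simpa [Finsupp.single_apply] using this
    · have := congrArg (fun f => f 1) hcon; simpa [Finsupp.single_apply] using this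

lemma Xv_coeff (a b : ℕ) :
    (Xv : MvPowerSeries (Fin 2) A) (d2 a b) = if a = 0 ∧ b = 1 then 1 else 0 := by
  have hc := MvPowerSeries.coeff_X (R := A) (d2 a b) 1
  rw [coeff_apply] at hc
  rw [Xv, hc]
  by_cases hab : a = 0 ∧ b = 1
  · rw [if_pos hab, if_pos]
    obtain ⟨rfl, rfl⟩ := hab
    ext i; fin_cases i <;> simp [Finsupp.single_apply]
  · rw [if_neg hab, if_neg]
    intro hcon
    refine hab ⟨?_, ?_⟩
    · have := congrArg (fun f => f 0) hcon; simpa [Finsupp.single_apply] using this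
    · have := congrArg (fun f => f 1) hcon; simpa [Finsupp.single_apply] using this

lemma Xu_eq : (Xu : MvPowerSeries (Fin 2) A) = Useries (fun r => if r = 1 then 1 else 0) := by
  apply ext2
  intro a b
  rw [Xu_coeff, Useries_coeff]
  by_cases hb : b = 0 <;> by_cases ha : a = 1 <;> simp [ha, hb]

lemma Xv_eq : (Xv : MvPowerSeries (Fin 2) A) = Vseries (fun r => if r = 1 then 1 else 0) := by
  apply ext2
  intro a b
  rw [Xv_coeff, Vseries_coeff]
  by_cases hb : b = 1 <;> by_cases ha : a = 0 <;> simp [ha, hb]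

end Aux

section Sig

/-- expansion of `(u+c)⁻¹` in powers of `u⁻¹`, as an integer power series. -/
def sig (c : ℤ) : PowerSeries ℤ := PowerSeries.mk fun s => if s = 0 then 0 else (-c) ^ (s - 1)

lemma coeff_sig (c : ℤ) (q : ℕ) :
    PowerSeries.coeff q (sig c) = if q = 0 then 0 else (-c) ^ (q - 1) := by
  rw [sig, PowerSeries.coeff_mk]

lemma sum_Icc_choose_pred {r m : ℕ} (h : r + 1 ≤ m) :
    ∑ p ∈ Finset.Icc r (m - 1), ((p - 1).choose (p - r) : ℤ) =
      ((m - 1).choose (m - 1 - r) : ℤ) := by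
  rcases Nat.eq_zero_or_pos r with hr | hr
  · subst hr
    rw [Finset.sum_eq_single 0]
    · simp
    · intro p hp hne
      rw [Nat.choose_eq_zero_of_lt (by omega : p - 1 < p - 0)]
      simp
    · intro habs
      simp only [Finset.mem_Icc] at habs
      omega
  · obtain ⟨s, rfl⟩ : ∃ s, r = s + 1 := ⟨r - 1, by omega⟩
    have hm2 : m - 1 = (m - 2) + 1 := by omega
    rw [hm2, ← Finset.map_add_right_Icc s (m-2) 1, Finset.sum_map]
    have hstep : ∀ j ∈ Finset.Icc s (m - 2),
        ((((addRightEmbedding 1) j - 1).choose ((addRightEmbedding 1) j - (s+1)) : ℕ) : ℤ)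
          = (j.choose s : ℤ) := by
      intro j hj
      simp only [Finset.mem_Icc] at hj
      rw [addRightEmbedding_apply]
      have e2 : j + 1 - 1 = j := by omega
      have e3 : j + 1 - (s + 1) = j - s := by omega
      rw [e2, e3, Nat.choose_symm hj.1]
    rw [Finset.sum_congr rfl hstep, ← Nat.cast_sum, Nat.sum_Icc_choose (m - 2) s]
    congr 1
    rw [← hm2, ← Nat.choose_symm (by omega : s + 1 ≤ m - 1)]

lemma coeff_sig_pow (c : ℤ) (r m : ℕ) :
    PowerSeries.coeff m ((sig c) ^ r) =
      if r ≤ m then (-c) ^ (m - r) * ((m - 1).choose (m - r) : ℤ) else 0 := by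
  induction r generalizing m with
  | zero =>
    rw [pow_zero, PowerSeries.coeff_one]
    rcases Nat.eq_zero_or_pos m with hm | hm
    · subst hm; simp
    · rw [if_neg (by omega), if_pos (by omega), Nat.choose_eq_zero_of_lt (by omega)]
      simp
  | succ r ih =>
    rw [pow_succ, PowerSeries.coeff_mul, Finset.Nat.sum_antidiagonal_eq_sum_range_succ_mk]
    simp only [ih, coeff_sig]
    rcases le_or_gt (r + 1) m with hm | hm
    · rw [if_pos hm]
      have hsub : Finset.Icc r (m - 1) ⊆ Finset.range (m + 1) := by
        intro p hp; simp only [Finset.mem_Icc] at hp; simp only [Finset.mem_range]; omega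
      have hzero : ∀ p ∈ Finset.range (m + 1), p ∉ Finset.Icc r (m - 1) →
          (if r ≤ p then (-c) ^ (p - r) * ((p - 1).choose (p - r) : ℤ) else 0) *
            (if m - p = 0 then 0 else (-c) ^ (m - p - 1)) = 0 := by
        intro p hp hnp
        simp only [Finset.mem_range] at hp
        simp only [Finset.mem_Icc] at hnp
        rcases le_or_gt r p with h1 | h1
        · rw [if_pos (by omega : m - p = 0)]
          simp
        · rw [if_neg (by omega)]
          simp
      rw [← Finset.sum_subset hsub hzero]
      have hterm : ∀ p ∈ Finset.Icc r (m - 1),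
          (if r ≤ p then (-c) ^ (p - r) * ((p - 1).choose (p - r) : ℤ) else 0) *
            (if m - p = 0 then 0 else (-c) ^ (m - p - 1))
          = (-c) ^ (m - (r+1)) * ((p - 1).choose (p - r) : ℤ) := by
        intro p hp
        simp only [Finset.mem_Icc] at hp
        rw [if_pos hp.1, if_neg (by omega)]
        have e : (-c) ^ (p - r) * ((p - 1).choose (p - r) : ℤ) * (-c) ^ (m - p - 1)
            = ((-c) ^ (p - r) * (-c) ^ (m - p - 1)) * ((p - 1).choose (p - r) : ℤ) := by ring
        rw [e, ← pow_add]
        congr 2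
        omega
      rw [Finset.sum_congr rfl hterm, ← Finset.mul_sum, sum_Icc_choose_pred hm,
        show m - (r+1) = m - 1 - r from by omega]
    · rw [if_neg (by omega)]
      apply Finset.sum_eq_zero
      intro p hp
      simp only [Finset.mem_range] at hp
      rcases le_or_gt r p with h1 | h1
      · rw [if_pos (by omega : m - p = 0)]
        simp
      · rw [if_neg (by omega)]
        simp

end Sig

section ShiftCoeff

variable {A : Type*} [Ring A]

lemma shiftCoeff_eq (c : ℤ) (f : ℕ → A) (a : ℕ) :
    shiftCoeff c f a = ∑ r ∈ Finset.range (a+1), (PowerSeries.coeff a ((sig c)^r)) • f r := by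
  unfold shiftCoeff
  apply Finset.sum_congr rfl
  intro r hr
  simp only [Finset.mem_range] at hr
  rw [coeff_sig_pow, if_pos (by omega)]

lemma shiftCoeff_extend (c : ℤ) (f : ℕ → A) (a N : ℕ) (hN : a + 1 ≤ N) :
    shiftCoeff c f a = ∑ r ∈ Finset.range N, (PowerSeries.coeff a ((sig c)^r)) • f r := by
  rw [shiftCoeff_eq]
  apply Finset.sum_subset (Finset.range_subset_range.2 hN)
  intro r _ hr
  simp only [Finset.mem_range] at hr
  rw [coeff_sig_pow, if_neg (by omega), zero_smul]

lemma triangle_sum {M : Type*} [AddCommMonoid M] (a : ℕ) (T : ℕ → ℕ → M)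
    (hT : ∀ x y, a < x + y → T x y = 0) :
    ∑ r ∈ Finset.range (a+1), ∑ x ∈ Finset.range (r+1), T x (r - x)
      = ∑ x ∈ Finset.range (a+1), ∑ y ∈ Finset.range (a+1), T x y := by
  rw [Finset.sum_sigma' (Finset.range (a+1)) (fun r => Finset.range (r+1))
    (fun r x => T x (r - x))]
  rw [Finset.sum_sigma' (Finset.range (a+1)) (fun _ => Finset.range (a+1)) (fun x y => T x y)]
  rw [show (∑ p ∈ (Finset.range (a+1)).sigma (fun _ => Finset.range (a+1)), T p.1 p.2)
      = ∑ p ∈ ((Finset.range (a+1)).sigma (fun _ => Finset.range (a+1))).filter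
          (fun p => p.1 + p.2 ≤ a), T p.1 p.2 from ?_]
  · refine Finset.sum_bij' (fun s _ => (⟨s.2, s.1 - s.2⟩ : (_ : ℕ) × ℕ))
      (fun p _ => (⟨p.1 + p.2, p.1⟩ : (_ : ℕ) × ℕ)) ?_ ?_ ?_ ?_ ?_
    · intro s hs
      simp only [Finset.mem_sigma, Finset.mem_range] at hs
      simp only [Finset.mem_filter, Finset.mem_sigma, Finset.mem_range]
      omega
    · intro p hp
      simp only [Finset.mem_filter, Finset.mem_sigma, Finset.mem_range] at hp
      simp only [Finset.mem_sigma, Finset.mem_range]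
      omega
    · intro s hs
      obtain ⟨r, x⟩ := s
      simp only [Finset.mem_sigma, Finset.mem_range] at hs
      beta_reduce
      have h1 : x + (r - x) = r := by omega
      simp [h1]
    · intro p hp
      obtain ⟨x, y⟩ := p
      simp only [Finset.mem_filter, Finset.mem_sigma, Finset.mem_range] at hp
      beta_reduce
      simp
    · intro s hs
      obtain ⟨r, x⟩ := s
      simp only [Finset.mem_sigma, Finset.mem_range] at hs
      beta_reduce
      rfl
  · symm
    apply Finset.sum_subset (Finset.filter_subset _ _)
    intro p hp hnp
    simp only [Finset.mem_filter, Finset.mem_sigma, Finset.mem_range] at hp hnp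
    exact hT p.1 p.2 (by omega)

lemma shiftCoeff_mul_conv (c : ℤ) (f g : ℕ → A) (a : ℕ) :
    shiftCoeff c (fun m => ∑ x ∈ Finset.range (m+1), f x * g (m - x)) a
      = ∑ p ∈ Finset.range (a+1), shiftCoeff c f p * shiftCoeff c g (a - p) := by
  have hW0 : ∀ x y : ℕ, a < x + y → (PowerSeries.coeff a ((sig c)^(x+y))) = 0 := by
    intro x y hxy
    rw [coeff_sig_pow, if_neg (by omega)]
  have hrhs : ∀ p ∈ Finset.range (a+1),
      shiftCoeff c f p * shiftCoeff c g (a - p)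
        = ∑ x ∈ Finset.range (a+1), ∑ y ∈ Finset.range (a+1),
            ((PowerSeries.coeff p ((sig c)^x)) * (PowerSeries.coeff (a-p) ((sig c)^y)))
              • (f x * g y) := by
    intro p hp
    simp only [Finset.mem_range] at hp
    rw [shiftCoeff_extend c f p (a+1) (by omega), shiftCoeff_extend c g (a-p) (a+1) (by omega),
      Finset.sum_mul_sum]
    apply Finset.sum_congr rfl; intro x _
    apply Finset.sum_congr rfl; intro y _
    rw [smul_mul_smul_comm]
  rw [Finset.sum_congr rfl hrhs]
  rw [Finset.sum_comm]
  have swap2 : ∀ x ∈ Finset.range (a+1),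
      (∑ p ∈ Finset.range (a+1), ∑ y ∈ Finset.range (a+1),
        ((PowerSeries.coeff p ((sig c)^x)) * (PowerSeries.coeff (a-p) ((sig c)^y))) • (f x * g y))
      = ∑ y ∈ Finset.range (a+1),
          (PowerSeries.coeff a ((sig c)^(x+y))) • (f x * g y) := by
    intro x _
    rw [Finset.sum_comm]
    apply Finset.sum_congr rfl; intro y _
    rw [← Finset.sum_smul]
    congr 1
    rw [pow_add, PowerSeries.coeff_mul, Finset.Nat.sum_antidiagonal_eq_sum_range_succ_mk]
  rw [Finset.sum_congr rfl swap2]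
  rw [shiftCoeff_eq]
  have lhs2 : ∀ r ∈ Finset.range (a+1),
      (PowerSeries.coeff a ((sig c)^r)) • (∑ x ∈ Finset.range (r+1), f x * g (r - x))
        = ∑ x ∈ Finset.range (r+1),
            (PowerSeries.coeff a ((sig c)^(x + (r - x)))) • (f x * g (r - x)) := by
    intro r _
    rw [Finset.smul_sum]
    apply Finset.sum_congr rfl; intro x hx
    simp only [Finset.mem_range] at hx
    rw [show x + (r - x) = r from by omega]
  rw [Finset.sum_congr rfl lhs2]
  exact triangle_sum a (fun x y => (PowerSeries.coeff a ((sig c)^(x+y))) • (f x * g y))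
    (fun x y hxy => by rw [hW0 x y hxy, zero_smul])

lemma shiftCoeff_sub (c : ℤ) (f g : ℕ → A) (a : ℕ) :
    shiftCoeff c (fun m => f m - g m) a = shiftCoeff c f a - shiftCoeff c g a := by
  unfold shiftCoeff
  rw [← Finset.sum_sub_distrib]
  apply Finset.sum_congr rfl
  intro r _
  rw [smul_sub]

lemma shiftCoeff_finsum {ι : Type*} (c : ℤ) (s : Finset ι) (f : ι → ℕ → A) (a : ℕ) :
    shiftCoeff c (fun m => ∑ z ∈ s, f z m) a = ∑ z ∈ s, shiftCoeff c (f z) a := by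
  unfold shiftCoeff
  rw [Finset.sum_comm]
  apply Finset.sum_congr rfl
  intro r _
  rw [Finset.smul_sum]

lemma shiftCoeff_zero_fun (c : ℤ) (a : ℕ) :
    shiftCoeff c (fun _ => (0 : A)) a = 0 := by
  unfold shiftCoeff
  simp

lemma shiftCoeff_delta0 (c : ℤ) (x : A) (a : ℕ) :
    shiftCoeff c (fun r => if r = 0 then x else 0) a = if a = 0 then x else 0 := by
  unfold shiftCoeff
  rw [Finset.sum_eq_single 0 (fun r _ hr => by beta_reduce; rw [if_neg hr, smul_zero])
    (fun hcon => absurd hcon (by simp))]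
  beta_reduce
  rcases Nat.eq_zero_or_pos a with ha | ha
  · subst ha; simp
  · rw [if_pos rfl, if_neg (by omega), Nat.choose_eq_zero_of_lt (by omega : a - 1 < a - 0)]
    simp

lemma shiftCoeff_delta1 (c : ℤ) (x : A) (a : ℕ) :
    shiftCoeff c (fun r => if r = 1 then x else 0) a
      = if a = 0 then 0 else ((-c) ^ (a - 1)) • x := by
  rcases Nat.eq_zero_or_pos a with ha | ha
  · subst ha
    unfold shiftCoeff
    simp
  · unfold shiftCoeff
    rw [Finset.sum_eq_single 1 (fun r _ hr => by beta_reduce; rw [if_neg hr, smul_zero])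
      (fun hcon => absurd hcon (by simp only [Finset.mem_range, not_not]; omega))]
    beta_reduce
    rw [if_pos rfl, if_neg (by omega), Nat.choose_self]
    simp

end ShiftCoeff

section PhiPsi

variable {A : Type*} [Ring A]

lemma add_coeff (F G : MvPowerSeries (Fin 2) A) (d : Fin 2 →₀ ℕ) :
    (F + G) d = F d + G d := rfl

lemma zsmul_coeff (z : ℤ) (F : MvPowerSeries (Fin 2) A) (d : Fin 2 →₀ ℕ) :
    (z • F) d = z • F d := rfl

lemma Xu_mul_coeff (F : MvPowerSeries (Fin 2) A) (a b : ℕ) :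
    ((Xu * F : MvPowerSeries (Fin 2) A)) (d2 a b) = if a = 0 then 0 else F (d2 (a-1) b) := by
  rw [coeff_mul2]
  have hrow : ∀ x ∈ Finset.range (a+1),
      (∑ z ∈ Finset.range (b + 1), Xu (d2 x z) * F (d2 (a - x) (b - z)))
        = if x = 1 then F (d2 (a-1) b) else 0 := by
    intro x _
    by_cases hx : x = 1
    · subst hx
      rw [if_pos rfl, Finset.sum_eq_single 0]
      · rw [Xu_coeff, if_pos ⟨rfl, rfl⟩, one_mul, Nat.sub_zero]
      · intro z _ hz
        rw [Xu_coeff, if_neg (by tauto), zero_mul]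
      · intro hcon
        exact absurd hcon (by simp)
    · rw [if_neg hx]
      apply Finset.sum_eq_zero
      intro z _
      rw [Xu_coeff, if_neg (by tauto), zero_mul]
  rw [Finset.sum_congr rfl hrow, Finset.sum_ite_eq' (Finset.range (a+1)) 1
    (fun _ => F (d2 (a-1) b))]
  rcases Nat.eq_zero_or_pos a with ha | ha
  · subst ha; simp
  · rw [if_pos (by simp only [Finset.mem_range]; omega), if_neg (by omega)]

lemma Xu_mul_cancel {F G : MvPowerSeries (Fin 2) A} (h : Xu * F = Xu * G) : F = G := by
  apply ext2
  intro a b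
  have h2 : ((Xu * F : MvPowerSeries (Fin 2) A)) (d2 (a+1) b)
      = ((Xu * G : MvPowerSeries (Fin 2) A)) (d2 (a+1) b) := congrFun h (d2 (a+1) b)
  rw [Xu_mul_coeff, Xu_mul_coeff, if_neg (by omega), if_neg (by omega)] at h2
  simpa using h2

/-- Substitution `u ↦ u + c` (i.e. `u⁻¹ ↦ (u+c)⁻¹`), acting on `A[[u⁻¹,v⁻¹]]`. -/
def phi (c : ℤ) (F : MvPowerSeries (Fin 2) A) : MvPowerSeries (Fin 2) A :=
  fun d => shiftCoeff c (fun r => F (d2 r (d 1))) (d 0)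

lemma phi_coeff (c : ℤ) (F : MvPowerSeries (Fin 2) A) (a b : ℕ) :
    phi c F (d2 a b) = shiftCoeff c (fun r => F (d2 r b)) a := by
  show shiftCoeff c (fun r => F (d2 r (d2 a b 1))) (d2 a b 0) = _
  rw [d2_apply0, d2_apply1]

lemma phi_sub (c : ℤ) (F G : MvPowerSeries (Fin 2) A) :
    phi c (F - G) = phi c F - phi c G := by
  apply ext2
  intro a b
  rw [sub_coeff, phi_coeff, phi_coeff, phi_coeff, ← shiftCoeff_sub]
  have h0 : (fun r => (F - G) (d2 r b)) = fun m => F (d2 m b) - G (d2 m b) := by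
    funext r
    rw [sub_coeff]
  rw [h0]

lemma phi_mul (c : ℤ) (F G : MvPowerSeries (Fin 2) A) :
    phi c (F * G) = phi c F * phi c G := by
  apply ext2
  intro a b
  rw [phi_coeff, coeff_mul2]
  have h1 : (fun r => (F * G) (d2 r b))
      = fun r => ∑ z ∈ Finset.range (b + 1),
          ∑ x ∈ Finset.range (r + 1), F (d2 x z) * G (d2 (r - x) (b - z)) := by
    funext r
    rw [coeff_mul2]
    exact Finset.sum_comm
  rw [h1, shiftCoeff_finsum c (Finset.range (b+1))
    (fun z => fun r => ∑ x ∈ Finset.range (r + 1), F (d2 x z) * G (d2 (r - x) (b - z))) a]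
  have h2 : ∀ z ∈ Finset.range (b+1),
      shiftCoeff c (fun r => ∑ x ∈ Finset.range (r + 1), F (d2 x z) * G (d2 (r - x) (b - z))) a
        = ∑ p ∈ Finset.range (a+1),
            shiftCoeff c (fun x => F (d2 x z)) p *
              shiftCoeff c (fun y => G (d2 y (b - z))) (a - p) := by
    intro z _
    exact shiftCoeff_mul_conv c (fun x => F (d2 x z)) (fun y => G (d2 y (b - z))) a
  rw [Finset.sum_congr rfl h2, Finset.sum_comm]
  apply Finset.sum_congr rfl
  intro p _
  apply Finset.sum_congr rfl
  intro z _
  rw [phi_coeff, phi_coeff]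

lemma phi_Useries (c : ℤ) (f : ℕ → A) :
    phi c (Useries f) = Useries (shiftCoeff c f) := by
  apply ext2
  intro a b
  rw [phi_coeff, Useries_coeff]
  by_cases hb : b = 0
  · subst hb
    rw [if_pos rfl]
    have h0 : (fun r => Useries f (d2 r 0)) = f := by
      funext r
      rw [Useries_coeff, if_pos rfl]
    rw [h0]
  · rw [if_neg hb]
    have h0 : (fun r => Useries f (d2 r b)) = fun _ => (0 : A) := by
      funext r
      rw [Useries_coeff, if_neg hb]
    rw [h0, shiftCoeff_zero_fun]

lemma phi_Vseries (c : ℤ) (f : ℕ → A) :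
    phi c (Vseries f) = Vseries f := by
  apply ext2
  intro a b
  rw [phi_coeff]
  have h0 : (fun r => Vseries f (d2 r b)) = fun r => if r = 0 then f b else 0 := by
    funext r
    rw [Vseries_coeff]
  rw [h0, shiftCoeff_delta0, Vseries_coeff]

lemma phi_Xv (c : ℤ) : phi c (Xv : MvPowerSeries (Fin 2) A) = Xv := by
  rw [Xv_eq, phi_Vseries]

lemma phi_Xu (c : ℤ) :
    phi c (Xu : MvPowerSeries (Fin 2) A)
      = Useries (shiftCoeff c (fun r => if r = 1 then 1 else 0)) := by
  rw [Xu_eq, phi_Useries]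

/-- The key unit relation: `(1 + c·u⁻¹) · [(u+c)⁻¹ expanded] = u⁻¹`. -/
lemma one_add_mul_phi_Xu (c : ℤ) :
    (1 + c • (Xu : MvPowerSeries (Fin 2) A)) * phi c Xu = Xu := by
  rw [phi_Xu, add_mul, one_mul, smul_mul_assoc]
  apply ext2
  intro a b
  rw [add_coeff, zsmul_coeff, Xu_mul_coeff, Useries_coeff, Xu_coeff, shiftCoeff_delta1]
  by_cases hb : b = 0
  · subst hb
    rw [if_pos rfl]
    rcases Nat.lt_or_ge a 2 with ha | ha
    · interval_cases a <;> simp [Useries_coeff, shiftCoeff_delta1]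
    · have h1 : Useries (shiftCoeff c fun r => if r = 1 then (1:A) else 0) (d2 (a-1) 0)
          = (-c)^(a-2) • (1:A) := by
        rw [Useries_coeff, if_pos rfl, shiftCoeff_delta1, if_neg (by omega),
          show a - 1 - 1 = a - 2 from by omega]
      rw [if_neg (by omega), if_neg (by omega), h1,
        if_neg (show ¬(a = 1 ∧ (0:ℕ) = 0) from by rintro ⟨h1', _⟩; omega)]
      rw [smul_smul, ← add_smul]
      have hpow : (-c) ^ (a - 1) + c * (-c) ^ (a - 2) = 0 := by
        have h2 : a - 1 = (a - 2) + 1 := by omega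
        rw [h2, pow_succ']
        ring
      rw [hpow, zero_smul]
  · rw [if_neg hb]
    rcases Nat.eq_zero_or_pos a with ha | ha
    · subst ha
      rw [if_pos rfl,
        if_neg (show ¬((0:ℕ) = 1 ∧ b = 0) from by rintro ⟨h1', _⟩; exact absurd h1' (by omega))]
      simp
    · rw [if_neg (by omega : ¬ a = 0), Useries_coeff, if_neg hb,
        if_neg (show ¬(a = 1 ∧ b = 0) from by rintro ⟨_, h2'⟩; exact hb h2')]
      simp

/-- Substitution `v ↦ u` (diagonal), acting on `A[[u⁻¹,v⁻¹]]`. -/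
def psi (F : MvPowerSeries (Fin 2) A) : MvPowerSeries (Fin 2) A :=
  fun d => if d 1 = 0 then ∑ p ∈ Finset.range (d 0 + 1), F (d2 p (d 0 - p)) else 0

lemma psi_coeff0 (F : MvPowerSeries (Fin 2) A) (a : ℕ) :
    psi F (d2 a 0) = ∑ p ∈ Finset.range (a + 1), F (d2 p (a - p)) := by
  show (if d2 a 0 1 = 0 then ∑ p ∈ Finset.range (d2 a 0 0 + 1), F (d2 p (d2 a 0 0 - p)) else 0) = _
  rw [d2_apply0, d2_apply1, if_pos rfl]

lemma psi_coeff_ne (F : MvPowerSeries (Fin 2) A) (a b : ℕ) (hb : b ≠ 0) :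
    psi F (d2 a b) = 0 := by
  show (if d2 a b 1 = 0 then ∑ p ∈ Finset.range (d2 a b 0 + 1), F (d2 p (d2 a b 0 - p)) else 0) = _
  rw [d2_apply1, if_neg hb]

lemma psi_sub (F G : MvPowerSeries (Fin 2) A) : psi (F - G) = psi F - psi G := by
  apply ext2
  intro a b
  rw [sub_coeff]
  by_cases hb : b = 0
  · subst hb
    rw [psi_coeff0, psi_coeff0, psi_coeff0, ← Finset.sum_sub_distrib]
    apply Finset.sum_congr rfl
    intro p _
    rw [sub_coeff]
  · rw [psi_coeff_ne _ _ _ hb, psi_coeff_ne _ _ _ hb, psi_coeff_ne _ _ _ hb, sub_zero]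

lemma psi_nsmul (n : ℕ) (F : MvPowerSeries (Fin 2) A) : psi (n • F) = n • psi F := by
  apply ext2
  intro a b
  rw [nsmul_coeff]
  by_cases hb : b = 0
  · subst hb
    rw [psi_coeff0, psi_coeff0, Finset.smul_sum]
    apply Finset.sum_congr rfl
    intro p _
    rw [nsmul_coeff]
  · rw [psi_coeff_ne _ _ _ hb, psi_coeff_ne _ _ _ hb, smul_zero]

lemma psi_add (F G : MvPowerSeries (Fin 2) A) : psi (F + G) = psi F + psi G := by
  apply ext2
  intro a b
  rw [add_coeff]
  by_cases hb : b = 0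
  · subst hb
    rw [psi_coeff0, psi_coeff0, psi_coeff0, ← Finset.sum_add_distrib]
    apply Finset.sum_congr rfl
    intro p _
    rw [add_coeff]
  · rw [psi_coeff_ne _ _ _ hb, psi_coeff_ne _ _ _ hb, psi_coeff_ne _ _ _ hb, add_zero]

lemma psi_mul (F G : MvPowerSeries (Fin 2) A) : psi (F * G) = psi F * psi G := by
  apply ext2
  intro a b
  by_cases hb : b = 0
  case neg =>
    rw [psi_coeff_ne _ _ _ hb, coeff_mul2]
    symm
    apply Finset.sum_eq_zero
    intro x _
    apply Finset.sum_eq_zero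
    intro z hz
    simp only [Finset.mem_range] at hz
    by_cases hz0 : z = 0
    · subst hz0
      rw [psi_coeff_ne _ _ _ (by omega : b - 0 ≠ 0), mul_zero]
    · rw [psi_coeff_ne _ _ _ hz0, zero_mul]
  case pos =>
    subst hb
    rw [psi_coeff0, coeff_mul2]
    have hrhs : ∀ x ∈ Finset.range (a+1),
        (∑ z ∈ Finset.range (0 + 1), psi F (d2 x z) * psi G (d2 (a - x) (0 - z)))
          = ∑ q ∈ Finset.range (x+1), ∑ s ∈ Finset.range (a - x + 1),
              F (d2 q (x - q)) * G (d2 s (a - x - s)) := by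
      intro x _
      rw [show (0:ℕ) + 1 = 1 from rfl, Finset.range_one, Finset.sum_singleton]
      rw [show (0:ℕ) - 0 = 0 from rfl, psi_coeff0, psi_coeff0, Finset.sum_mul_sum]
    rw [Finset.sum_congr rfl hrhs]
    have hlhs : ∀ p ∈ Finset.range (a+1),
        (F * G) (d2 p (a - p))
          = ∑ x ∈ Finset.range (p+1), ∑ z ∈ Finset.range (a - p + 1),
              F (d2 x z) * G (d2 (p - x) (a - p - z)) := by
      intro p _
      rw [coeff_mul2]
    rw [Finset.sum_congr rfl hlhs]
    -- now a triple-sum bijection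
    have hconv : ∀ p ∈ Finset.range (a+1),
        (∑ x ∈ Finset.range (p+1), ∑ z ∈ Finset.range (a - p + 1),
            F (d2 x z) * G (d2 (p - x) (a - p - z)))
          = ∑ q ∈ Finset.range (p+1) ×ˢ Finset.range (a - p + 1),
              F (d2 q.1 q.2) * G (d2 (p - q.1) (a - p - q.2)) := by
      intro p _
      rw [Finset.sum_product]
    have hconv2 : ∀ x ∈ Finset.range (a+1),
        (∑ q ∈ Finset.range (x+1), ∑ s ∈ Finset.range (a - x + 1),
            F (d2 q (x - q)) * G (d2 s (a - x - s)))
          = ∑ q ∈ Finset.range (x+1) ×ˢ Finset.range (a - x + 1),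
              F (d2 q.1 (x - q.1)) * G (d2 q.2 (a - x - q.2)) := by
      intro x _
      rw [Finset.sum_product]
    rw [Finset.sum_congr rfl hconv, Finset.sum_congr rfl hconv2]
    rw [Finset.sum_sigma' (Finset.range (a+1))
      (fun p => Finset.range (p+1) ×ˢ Finset.range (a - p + 1))
      (fun p q => F (d2 q.1 q.2) * G (d2 (p - q.1) (a - p - q.2)))]
    rw [Finset.sum_sigma' (Finset.range (a+1))
      (fun x => Finset.range (x+1) ×ˢ Finset.range (a - x + 1))
      (fun x q => F (d2 q.1 (x - q.1)) * G (d2 q.2 (a - x - q.2)))]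
    refine Finset.sum_bij' (fun s _ => (⟨s.2.1 + s.2.2, (s.2.1, s.1 - s.2.1)⟩ : (_ : ℕ) × (ℕ × ℕ)))
      (fun t _ => (⟨t.2.1 + t.2.2, (t.2.1, t.1 - t.2.1)⟩ : (_ : ℕ) × (ℕ × ℕ))) ?_ ?_ ?_ ?_ ?_
    · intro s hs
      obtain ⟨p, x, z⟩ := s
      simp only [Finset.mem_sigma, Finset.mem_product, Finset.mem_range] at hs
      simp only [Finset.mem_sigma, Finset.mem_product, Finset.mem_range]
      omega
    · intro t ht
      obtain ⟨x', q, w⟩ := t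
      simp only [Finset.mem_sigma, Finset.mem_product, Finset.mem_range] at ht
      simp only [Finset.mem_sigma, Finset.mem_product, Finset.mem_range]
      omega
    · intro s hs
      obtain ⟨p, x, z⟩ := s
      simp only [Finset.mem_sigma, Finset.mem_product, Finset.mem_range] at hs
      beta_reduce
      have h1 : x + z - x = x + z - x := rfl
      simp only []
      have e1 : x + (x + z - x) = p ∨ True := Or.inr trivial
      have g1 : x + z - x = z := by omega
      rw [g1]
      have g2 : x + (p - x) = p := by omega
      simp [g2]
    · intro t ht
      obtain ⟨x', q, w⟩ := t
      simp only [Finset.mem_sigma, Finset.mem_product, Finset.mem_range] at ht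
      beta_reduce
      have g1 : q + (x' - q) = x' := by omega
      have g2 : q + w - q = w := by omega
      rw [g2]
      simp [g1]
    · intro s hs
      obtain ⟨p, x, z⟩ := s
      simp only [Finset.mem_sigma, Finset.mem_product, Finset.mem_range] at hs
      beta_reduce
      rw [show x + z - x = z from by omega, show a - (x + z) - (p - x) = a - p - z from by omega]

lemma psi_Useries (f : ℕ → A) : psi (Useries f) = Useries f := by
  apply ext2
  intro a b
  by_cases hb : b = 0
  · subst hb
    rw [psi_coeff0, Useries_coeff, if_pos rfl, Finset.sum_eq_single a]
    · rw [Useries_coeff, if_pos (by omega)]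
    · intro p hp hpa
      simp only [Finset.mem_range] at hp
      rw [Useries_coeff, if_neg (by omega)]
    · intro hcon
      exact absurd hcon (by simp)
  · rw [psi_coeff_ne _ _ _ hb, Useries_coeff, if_neg hb]

lemma psi_Vseries (f : ℕ → A) : psi (Vseries f) = Useries f := by
  apply ext2
  intro a b
  by_cases hb : b = 0
  · subst hb
    rw [psi_coeff0, Useries_coeff, if_pos rfl, Finset.sum_eq_single 0]
    · rw [Vseries_coeff, if_pos rfl, Nat.sub_zero]
    · intro p hp hp0
      rw [Vseries_coeff, if_neg hp0]
    · intro hcon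
      exact absurd hcon (by simp)
  · rw [psi_coeff_ne _ _ _ hb, Useries_coeff, if_neg hb]

lemma psi_Xu : psi (Xu : MvPowerSeries (Fin 2) A) = Xu := by
  rw [Xu_eq, psi_Useries]

lemma psi_Xv : psi (Xv : MvPowerSeries (Fin 2) A) = Xu := by
  rw [Xv_eq, Xu_eq, psi_Vseries]

end PhiPsi

section MainProof

variable {A : Type*} [Ring A]

lemma hUp_zero (h : ℕ → A) : hUp h 0 = 1 := rfl

lemma hUp_succ (h : ℕ → A) (n : ℕ) :
    hUp h (n+1) = hUp h n * Useries (shiftCoeff (n : ℤ) h) := by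
  unfold hUp
  rw [List.range_succ]
  simp

lemma psi_zsmul (z : ℤ) (F : MvPowerSeries (Fin 2) A) : psi (z • F) = z • psi F := by
  apply ext2
  intro a b
  rw [zsmul_coeff]
  by_cases hb : b = 0
  · subst hb
    rw [psi_coeff0, psi_coeff0, Finset.smul_sum]
    apply Finset.sum_congr rfl
    intro p _
    rw [zsmul_coeff]
  · rw [psi_coeff_ne _ _ _ hb, psi_coeff_ne _ _ _ hb, smul_zero]

lemma commW (x y : MvPowerSeries (Fin 2) A) :
    x * ((Xv - Xu) * y) = (Xv - Xu) * (x * y) := by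
  have hc : x * (Xv - Xu) = (Xv - Xu) * x := by
    have h1 := (MvPowerSeries.commute_X x (0 : Fin 2)).eq
    have h2 := (MvPowerSeries.commute_X x (1 : Fin 2)).eq
    rw [mul_sub, sub_mul, Xu, Xv, h1, h2]
  rw [← mul_assoc, hc, mul_assoc]

lemma commP (x y : MvPowerSeries (Fin 2) A) :
    x * ((Xu * Xv) * y) = (Xu * Xv) * (x * y) := by
  have hc : x * (Xu * Xv) = (Xu * Xv) * x := by
    have h1 := (MvPowerSeries.commute_X x (0 : Fin 2)).eq
    have h2 := (MvPowerSeries.commute_X x (1 : Fin 2)).eq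
    rw [Xu, Xv, ← mul_assoc, h1, mul_assoc, h2, ← mul_assoc]
  rw [← mul_assoc, hc, mul_assoc]

lemma star14 (h e : ℕ → A)
    (hhe : (Xv - Xu) * ⁅Useries h, Vseries e⁆ =
      Xu * Xv * (Useries h * (Useries e - Vseries e)))
    (n : ℕ) :
    (Xv - Xu + n • (Xu * Xv)) *
        (Useries (shiftCoeff (n:ℤ) h) * Vseries e
          - Vseries e * Useries (shiftCoeff (n:ℤ) h))
      = (Xu * Xv) * (Useries (shiftCoeff (n:ℤ) h) *
          (Useries (shiftCoeff (n:ℤ) e) - Vseries e)) := by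
  rw [Ring.lie_def] at hhe
  have H := congrArg (phi ((n : ℕ) : ℤ)) hhe
  simp only [phi_mul, phi_sub, phi_Useries, phi_Vseries, phi_Xv] at H
  have e1 : ∀ K' : MvPowerSeries (Fin 2) A,
      (1 + (n:ℤ) • (Xu : MvPowerSeries (Fin 2) A)) * ((Xv - phi ((n:ℕ):ℤ) Xu) * K')
        = ((1 + (n:ℤ) • (Xu : MvPowerSeries (Fin 2) A)) * Xv - Xu) * K' := by
    intro K'
    rw [← mul_assoc, mul_sub, one_add_mul_phi_Xu]
  have e2 : ∀ M' : MvPowerSeries (Fin 2) A,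
      (1 + (n:ℤ) • (Xu : MvPowerSeries (Fin 2) A)) * ((phi ((n:ℕ):ℤ) Xu * Xv) * M')
        = (Xu * Xv) * M' := by
    intro M'
    rw [← mul_assoc, ← mul_assoc, one_add_mul_phi_Xu]
  have e3 : (1 + (n:ℤ) • (Xu : MvPowerSeries (Fin 2) A)) * Xv - Xu
      = Xv - Xu + n • (Xu * Xv) := by
    rw [add_mul, one_mul, smul_mul_assoc, natCast_zsmul]
    abel
  have H2 := congrArg (fun z => (1 + (n:ℤ) • (Xu : MvPowerSeries (Fin 2) A)) * z) H
  beta_reduce at H2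
  rw [e1, e2, e3] at H2
  exact H2

lemma key14 (h e : ℕ → A)
    (hhe : (Xv - Xu) * ⁅Useries h, Vseries e⁆ =
      Xu * Xv * (Useries h * (Useries e - Vseries e)))
    (n : ℕ) :
    Useries (shiftCoeff (n:ℤ) h) * Useries (shiftCoeff (n:ℤ) e)
      = (n+1) • (Useries (shiftCoeff (n:ℤ) h) * Useries e)
        - n • (Useries e * Useries (shiftCoeff (n:ℤ) h)) := by
  have S := star14 h e hhe n
  have P := congrArg psi S
  simp only [psi_mul, psi_sub, psi_add, psi_nsmul, psi_zsmul, psi_Useries, psi_Vseries,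
    psi_Xu, psi_Xv] at P
  rw [sub_self, zero_add, smul_mul_assoc, ← mul_smul_comm, mul_assoc, mul_assoc] at P
  have hcan := Xu_mul_cancel (Xu_mul_cancel P)
  set hn : MvPowerSeries (Fin 2) A := Useries (shiftCoeff (n:ℤ) h) with hhn
  set en : MvPowerSeries (Fin 2) A := Useries (shiftCoeff (n:ℤ) e) with hen
  set E0 : MvPowerSeries (Fin 2) A := Useries e with hE0
  have h2 : hn * en - hn * E0 = n • (hn * E0) - n • (E0 * hn) := by
    have hcan' : n • (hn * E0) - n • (E0 * hn) = hn * en - hn * E0 := by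
      rw [← smul_sub, hcan, mul_sub]
    exact hcan'.symm
  calc hn * en = (n • (hn * E0) - n • (E0 * hn)) + hn * E0 := eq_add_of_sub_eq h2
    _ = (n+1) • (hn * E0) - n • (E0 * hn) := by
      simp only [succ_nsmul]
      abel

lemma step14 {R : Type*} [Ring R] (W P H q E F G : R) (n : ℕ)
    (hW : ∀ x y : R, x * (W * y) = W * (x * y))
    (hP : ∀ x y : R, x * (P * y) = P * (x * y))
    (h1 : (W + n • P) * (q * E - E * q) = P * (q * (G - E)))
    (h2 : W * (H * E - E * H) = n • (P * (H * (F - E))))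
    (h3 : q * G = (n+1) • (q * F) - n • (F * q)) :
    W * ((H * q) * E - E * (H * q)) = (n+1) • (P * ((H * q) * (F - E))) := by
  have e1 : W * (q * E - E * q) = P * (q * G - q * E) - n • (P * (q * E - E * q)) := by
    have h1' := h1
    rw [mul_sub q G E, add_mul, smul_mul_assoc] at h1'
    exact eq_sub_of_add_eq h1'
  have a1 : W * ((H * q) * E - E * (H * q))
      = H * (W * (q * E - E * q)) + (W * (H * E - E * H)) * q := by
    simp only [mul_sub, sub_mul, mul_assoc, hW]
    abel
  rw [a1, e1, h2, h3]
  simp only [mul_sub, sub_mul, mul_add, add_mul, smul_sub, smul_add, mul_smul_comm,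
    smul_mul_assoc, mul_assoc, hP]
  simp only [succ_nsmul]
  abel

lemma main14 (h e : ℕ → A)
    (hhe : (Xv - Xu) * ⁅Useries h, Vseries e⁆ =
      Xu * Xv * (Useries h * (Useries e - Vseries e)))
    (n : ℕ) :
    (Xv - Xu) * (hUp h n * Vseries e - Vseries e * hUp h n)
      = n • ((Xu * Xv) * (hUp h n * (Useries e - Vseries e))) := by
  induction n with
  | zero =>
    rw [hUp_zero]
    simp
  | succ n ih =>
    rw [hUp_succ]
    exact step14 (Xv - Xu) (Xu * Xv) (hUp h n) (Useries (shiftCoeff (n:ℤ) h)) (Vseries e)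
      (Useries e) (Useries (shiftCoeff (n:ℤ) e)) n commW commP
      (star14 h e hhe n) ih (key14 h e hhe n)

end MainProof

theorem stmt14 {k A : Type*} [Field k] [Ring A] [Algebra k A]
    (h e : ℕ → A) (hh0 : h 0 = 1) (he0 : e 0 = 0)
    (hhe : (Xv - Xu) * ⁅Useries h, Vseries e⁆ =
      Xu * Xv * (Useries h * (Useries e - Vseries e)))
    (hex : Useries (shiftCoeff 1 e) * Useries h =
      (Useries h * Useries e : MvPowerSeries (Fin 2) A))
    (ℓ : ℕ) (hl : 1 ≤ ℓ) :
    (Xv - Xu) * ⁅hUp h ℓ, Vseries e⁆ =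
      ℓ • (Xu * Xv * (hUp h ℓ * (Useries e - Vseries e))) := by
  rw [Ring.lie_def]
  exact main14 h e hhe ℓ
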